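/- Let U be an open convex subset of ℝⁿ, f : U → ℝ a continuous function, and L > 0. Suppose that for each p ∈ U there exist an open neighborhood N_p ⊆ U of p and a continuously differentiable lower support function f_p : N_p → ℝ such that f_p(p) = f(p), f_p(x) ≤ f(x) for all x ∈ N_p, and ‖∇f_p(p)‖ < L. Then f is Lipschitz continuous with constant L on U: |f(x) − f(y)| ≤ L‖x − y‖ for all x, y ∈ U. -/

import Mathlib

open Filter Metric Set

/-- Let `U` be an open convex subset of `ℝⁿ`, `f : U → ℝ` continuous, `L > 0`.
If every `p ∈ U` admits an open neighborhood `N ⊆ U` and a C¹ lower support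
function `fp : N → ℝ` (`fp p = f p`, `fp ≤ f` on `N`) with `‖∇fp(p)‖ < L`, then
`f` is Lipschitz with constant `L` on `U`: `|f x - f y| ≤ L‖x - y‖`. -/
theorem lipschitz_of_lower_support
    (n : ℕ) (U : Set (EuclideanSpace ℝ (Fin n))) (hUopen : IsOpen U)
    (hUconv : Convex ℝ U) (f : EuclideanSpace ℝ (Fin n) → ℝ)
    (hf : ContinuousOn f U) (L : ℝ) (hL : 0 < L)
    (hsupp : ∀ p ∈ U, ∃ N : Set (EuclideanSpace ℝ (Fin n)),
      IsOpen N ∧ p ∈ N ∧ N ⊆ U ∧ ∃ fp : EuclideanSpace ℝ (Fin n) → ℝ,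
        ContDiffOn ℝ 1 fp N ∧ fp p = f p ∧ (∀ x ∈ N, fp x ≤ f x) ∧
        ‖gradient fp p‖ < L) :
    ∀ x ∈ U, ∀ y ∈ U, |f x - f y| ≤ L * ‖x - y‖ := by
  -- local one-sided estimate
  have key : ∀ p ∈ U, ∃ ε > 0, ∀ z, dist z p < ε → f p - f z ≤ L * ‖p - z‖ := by
    intro p hp
    obtain ⟨N, hNo, hpN, hNU, fp, hC1, hfpp, hle, hgrad⟩ := hsupp p hp
    have hdiff : DifferentiableAt ℝ fp p :=
      (hC1.contDiffAt (hNo.mem_nhds hpN)).differentiableAt one_ne_zero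
    have hFd := hdiff.hasFDerivAt
    set f' := fderiv ℝ fp p with hf'
    have hnorm : ‖f'‖ = ‖gradient fp p‖ := by
      rw [gradient, LinearIsometryEquiv.norm_map]
    have hc : (0:ℝ) < L - ‖gradient fp p‖ := by linarith
    have hlo := hFd.isLittleO.def hc
    have hev : ∀ᶠ z in nhds p,
        ‖fp z - fp p - f' (z - p)‖ ≤ (L - ‖gradient fp p‖) * ‖z - p‖ ∧ z ∈ N :=
      hlo.and (hNo.mem_nhds hpN)
    rw [Metric.eventually_nhds_iff] at hev
    obtain ⟨ε, hε, H⟩ := hev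
    refine ⟨ε, hε, fun z hz => ?_⟩
    obtain ⟨h1, h2⟩ := H hz
    have h3 : fp z ≤ f z := hle z h2
    have h4 : ‖f' (z - p)‖ ≤ ‖gradient fp p‖ * ‖z - p‖ := by
      calc ‖f' (z - p)‖ ≤ ‖f'‖ * ‖z - p‖ := f'.le_opNorm _
        _ = _ := by rw [hnorm]
    have h5 : fp p - fp z ≤ L * ‖z - p‖ := by
      have a := neg_abs_le (fp z - fp p - f' (z - p))
      have b := neg_abs_le (f' (z - p))
      rw [Real.norm_eq_abs] at h1
      rw [Real.norm_eq_abs] at h4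
      nlinarith
    have h6 : ‖p - z‖ = ‖z - p‖ := norm_sub_rev _ _
    rw [h6]
    linarith [hfpp ▸ h5]
  -- one-sided global bound
  have oneside : ∀ x ∈ U, ∀ y ∈ U, f x - f y ≤ L * ‖x - y‖ := by
    intro x hx y hy
    set γ : ℝ → EuclideanSpace ℝ (Fin n) := fun t => x + t • (y - x) with hγ
    have hγmem : ∀ t ∈ Icc (0:ℝ) 1, γ t ∈ U := fun t ht =>
      hUconv.add_smul_sub_mem hx hy ht
    have hγcont : Continuous γ := by fun_prop
    set S : Set ℝ := {t | t ∈ Icc (0:ℝ) 1 ∧ f x - f (γ t) ≤ L * (t * ‖x - y‖)} with hS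
    have hS0 : (0:ℝ) ∈ S := by
      constructor
      · exact ⟨le_refl 0, zero_le_one⟩
      · simp [hγ]
    have hbdd : BddAbove S := ⟨1, fun t ht => ht.1.2⟩
    have hclosed : IsClosed S := by
      have hcf : ContinuousOn (fun t => f x - f (γ t) - L * (t * ‖x - y‖)) (Icc 0 1) := by
        apply ContinuousOn.sub
        · exact continuousOn_const.sub ((hf.comp hγcont.continuousOn) hγmem)
        · fun_prop
      have : S = Icc (0:ℝ) 1 ∩ (fun t => f x - f (γ t) - L * (t * ‖x - y‖)) ⁻¹' (Iic 0) := by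
        ext t; simp only [hS, mem_setOf_eq, mem_inter_iff, mem_preimage, mem_Iic]
        constructor
        · rintro ⟨h1, h2⟩; exact ⟨h1, by linarith⟩
        · rintro ⟨h1, h2⟩; exact ⟨h1, by linarith⟩
      rw [this]
      exact hcf.preimage_isClosed_of_isClosed isClosed_Icc isClosed_Iic
    set T := sSup S with hT
    have hTS : T ∈ S := hclosed.csSup_mem ⟨0, hS0⟩ hbdd
    have hT1 : T = 1 := by
      by_contra hne
      have hTlt : T < 1 := lt_of_le_of_ne hTS.1.2 hne
      obtain ⟨ε, hε, Hε⟩ := key (γ T) (hγmem T hTS.1)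
      set δ := min (1 - T) (ε / (‖y - x‖ + 1)) with hδ
      have hnorm1 : (0:ℝ) < ‖y - x‖ + 1 := by positivity
      have hδpos : 0 < δ := lt_min (by linarith) (by positivity)
      have ht'1 : T + δ ≤ 1 := by
        have := min_le_left (1 - T) (ε / (‖y - x‖ + 1)); simp only [hδ]; linarith
      have ht'0 : 0 ≤ T + δ := by linarith [hTS.1.1]
      have hdist : dist (γ (T + δ)) (γ T) < ε := by
        have : γ (T + δ) - γ T = δ • (y - x) := by
          simp [hγ, add_smul]
        rw [dist_eq_norm, this, norm_smul, Real.norm_eq_abs, abs_of_pos hδpos]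
        have h1 : δ ≤ ε / (‖y - x‖ + 1) := min_le_right _ _
        have h2 : δ * ‖y - x‖ ≤ (ε / (‖y - x‖ + 1)) * ‖y - x‖ :=
          mul_le_mul_of_nonneg_right h1 (norm_nonneg _)
        have h3 : (ε / (‖y - x‖ + 1)) * ‖y - x‖ < ε := by
          rw [div_mul_eq_mul_div, div_lt_iff₀ hnorm1]
          nlinarith [norm_nonneg (y - x)]
        linarith
      have hmem : T + δ ∈ S := by
        constructor
        · exact ⟨ht'0, ht'1⟩
        · have h1 := Hε (γ (T + δ)) hdist
          have h2 := hTS.2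
          have h3 : ‖γ T - γ (T + δ)‖ = δ * ‖y - x‖ := by
            have : γ T - γ (T + δ) = (-δ) • (y - x) := by
              simp [hγ, add_smul]
            rw [this, norm_smul, Real.norm_eq_abs, abs_neg, abs_of_pos hδpos]
          rw [h3] at h1
          have h4 : ‖y - x‖ = ‖x - y‖ := norm_sub_rev _ _
          rw [h4] at h1
          nlinarith
      have := le_csSup hbdd hmem
      linarith
    have : f x - f (γ 1) ≤ L * (1 * ‖x - y‖) := hT1 ▸ hTS.2
    have hγ1 : γ 1 = y := by simp [hγ]
    rw [hγ1] at this; linarith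
  intro x hx y hy
  rw [abs_sub_le_iff]
  refine ⟨oneside x hx y hy, ?_⟩
  have := oneside y hy x hx
  rwa [norm_sub_rev] at this
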